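/- arXiv:2405.15368 — 4 statements merged into one kernel-verified Lean document; each statement's English description precedes it below -/
import Mathlib

section
/- Let k ≤ n and H ∈ ℤ^{k×n} be an integer matrix of rank k. Then σ_max(H) ≤ n·‖H‖_max and σ_min(H) ≥ n^{-(n-1)}·‖H‖_max^{-(n-1)}, where ‖H‖_max = max_{i,j}|H_{ij}| is the maximum absolute value of an entry of H. -/
open Matrix Finset RealInnerProductSpace

private lemma euc_norm_sq {m : ℕ} (x : EuclideanSpace ℝ (Fin m)) :
    ‖x‖ ^ 2 = ∑ i, (x i) ^ 2 := by
  rw [EuclideanSpace.norm_eq, Real.sq_sqrt (by positivity)]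
  simp [Real.norm_eq_abs, sq_abs]

open Matrix
/-- Singular value bounds for a full-row-rank integer matrix `H ∈ ℤ^{k×n}`, `1 ≤ k ≤ n`:
`σ_max(H) ≤ n ‖H‖_max` and `σ_min(H) ≥ n^{-(n-1)} ‖H‖_max^{-(n-1)}`.
Here the set `S` of values `‖Hᵀ y‖` over unit vectors `y ∈ ℝ^k` has
`sSup S = σ_max(H)` and `sInf S = σ_min(H)` (the `k`-th singular value),
since `H` has rank `k`. -/
theorem singular_value_bounds_int_matrix {k n : ℕ} (hk : 0 < k) (hkn : k ≤ n)
    (H : Matrix (Fin k) (Fin n) ℤ)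
    (hrank : (H.map (Int.cast : ℤ → ℝ)).rank = k)
    (S : Set ℝ)
    (hS : S = {r : ℝ | ∃ (y : EuclideanSpace ℝ (Fin k)), ‖y‖ = 1 ∧
      r = ‖Matrix.toEuclideanLin (H.map (Int.cast : ℤ → ℝ))ᵀ y‖})
    (Hmax : ℝ) (hHmax : Hmax = ⨆ i, ⨆ j, |(H i j : ℝ)|) :
    sSup S ≤ n * Hmax ∧
    (n : ℝ) ^ (-(n - 1 : ℤ)) * Hmax ^ (-(n - 1 : ℤ)) ≤ sInf S := by
  set A : Matrix (Fin k) (Fin n) ℝ := H.map (Int.cast : ℤ → ℝ) with hA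
  -- entry bound
  have hent : ∀ i j, |(H i j : ℝ)| ≤ Hmax := by
    intro i j
    rw [hHmax]
    have h1 : |(H i j : ℝ)| ≤ ⨆ j', |(H i j' : ℝ)| :=
      le_ciSup (f := fun j' => |(H i j' : ℝ)|) (Set.Finite.bddAbove (Set.finite_range _)) j
    have h2 : (⨆ j', |(H i j' : ℝ)|) ≤ ⨆ i', ⨆ j', |(H i' j' : ℝ)| :=
      le_ciSup (f := fun i' => ⨆ j', |(H i' j' : ℝ)|) (Set.Finite.bddAbove (Set.finite_range _)) i
    exact h1.trans h2
  have hHmax1 : 1 ≤ Hmax := by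
    have hHnz : ∃ i j, H i j ≠ 0 := by
      by_contra h
      push_neg at h
      have hz : A = 0 := by ext i j; simp [hA, h i j]
      rw [hz, Matrix.rank_zero] at hrank
      omega
    obtain ⟨i, j, hij⟩ := hHnz
    have h1 : (1 : ℝ) ≤ |(H i j : ℝ)| := by
      rw [← Int.cast_abs]
      exact_mod_cast Int.one_le_abs hij
    exact h1.trans (hent i j)
  have hHmax0 : (0 : ℝ) ≤ Hmax := zero_le_one.trans hHmax1
  have hn1 : (1 : ℝ) ≤ (n : ℝ) := by exact_mod_cast Nat.one_le_iff_ne_zero.2 (by omega)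
  have hm1 : (1 : ℝ) ≤ (n : ℝ) * Hmax := one_le_mul_of_one_le_of_one_le hn1 hHmax1
  have hm0 : (0 : ℝ) < (n : ℝ) * Hmax := lt_of_lt_of_le one_pos hm1
  -- Aij squared bound
  have hAsq : ∀ i j, (A i j) ^ 2 ≤ Hmax ^ 2 := by
    intro i j
    have : |A i j| ≤ Hmax := hent i j
    nlinarith [abs_nonneg (A i j), sq_abs (A i j)]
  -- norm squared of the image
  have hnsq : ∀ y : EuclideanSpace ℝ (Fin k),
      ‖toEuclideanLin Aᵀ y‖ ^ 2 = ∑ j, ((Aᵀ *ᵥ (WithLp.equiv 2 (Fin k → ℝ) y)) j) ^ 2 := by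
    intro y
    rw [euc_norm_sq]
    rfl
  -- unit vectors have coordinate sum of squares one
  have hy2 : ∀ y : EuclideanSpace ℝ (Fin k), ‖y‖ = 1 → ∑ i, (y i) ^ 2 = 1 := by
    intro y hy
    rw [← euc_norm_sq, hy, one_pow]
  ---- Upper bound
  have upper : ∀ y : EuclideanSpace ℝ (Fin k), ‖y‖ = 1 →
      ‖toEuclideanLin Aᵀ y‖ ≤ n * Hmax := by
    intro y hy
    have hsq : ‖toEuclideanLin Aᵀ y‖ ^ 2 ≤ ((n : ℝ) * Hmax) ^ 2 := by
      rw [hnsq y]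
      have hterm : ∀ j, ((Aᵀ *ᵥ (WithLp.equiv 2 (Fin k → ℝ) y)) j) ^ 2 ≤ (k : ℝ) * Hmax ^ 2 := by
        intro j
        have h1 : ((Aᵀ *ᵥ (WithLp.equiv 2 (Fin k → ℝ) y)) j) ^ 2
            ≤ (∑ i, (A i j) ^ 2) * (∑ i, (y i) ^ 2) := by
          have := Finset.sum_mul_sq_le_sq_mul_sq Finset.univ (fun i => A i j)
            (fun i => y i)
          simpa [Matrix.mulVec, dotProduct, Matrix.transpose_apply] using this
        have h2 : (∑ i, (A i j) ^ 2) ≤ (k : ℝ) * Hmax ^ 2 := by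
          calc (∑ i, (A i j) ^ 2) ≤ ∑ _i : Fin k, Hmax ^ 2 :=
              Finset.sum_le_sum fun i _ => hAsq i j
          _ = (k : ℝ) * Hmax ^ 2 := by simp [mul_comm]
        calc ((Aᵀ *ᵥ (WithLp.equiv 2 (Fin k → ℝ) y)) j) ^ 2 ≤ (∑ i, (A i j) ^ 2) * 1 := by
              rw [hy2 y hy] at h1; exact h1
        _ ≤ (k : ℝ) * Hmax ^ 2 := by rw [mul_one]; exact h2
      calc ∑ j, ((Aᵀ *ᵥ (WithLp.equiv 2 (Fin k → ℝ) y)) j) ^ 2 ≤ ∑ _j : Fin n, (k : ℝ) * Hmax ^ 2 :=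
            Finset.sum_le_sum fun j _ => hterm j
      _ = (n : ℝ) * ((k : ℝ) * Hmax ^ 2) := by simp [mul_comm]
      _ ≤ ((n : ℝ) * Hmax) ^ 2 := by
            have hkn' : (k : ℝ) ≤ (n : ℝ) := by exact_mod_cast hkn
            nlinarith [sq_nonneg Hmax]
    nlinarith [norm_nonneg (toEuclideanLin Aᵀ y), hm0]
  ---- Spectral setup
  set Br : Matrix (Fin k) (Fin k) ℝ := A * Aᵀ with hBr
  have hAH : Aᴴ = Aᵀ := by ext i j; simp [Matrix.conjTranspose_apply]
  have hherm : Br.IsHermitian := by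
    rw [hBr, ← hAH]; exact isHermitian_mul_conjTranspose_self A
  have hranB : Br.rank = k := by
    rw [hBr, ← hAH, Matrix.rank_self_mul_conjTranspose, hrank]
  set lam : Fin k → ℝ := hherm.eigenvalues with hlam
  have hnn : ∀ i, 0 ≤ lam i := by
    intro i
    have hps : Br.PosSemidef := by
      rw [hBr, ← hAH]; exact posSemidef_self_mul_conjTranspose A
    exact hps.eigenvalues_nonneg i
  have hne : ∀ i, lam i ≠ 0 := by
    intro i hi
    have hcard := hherm.rank_eq_card_non_zero_eigs
    rw [hranB, ← hlam] at hcard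
    have hlt : Fintype.card {j // lam j ≠ 0} < k := by
      have := Fintype.card_subtype_lt (p := fun j => lam j ≠ 0) (x := i) (by simp [hi])
      simpa using this
    omega
  have hpos : ∀ i, 0 < lam i := fun i => (hnn i).lt_of_ne' (hne i)
  -- trace
  set t : ℝ := ((n : ℝ) * Hmax) ^ 2 with ht
  have ht1 : (1 : ℝ) ≤ t := by nlinarith
  have ht0 : (0 : ℝ) < t := lt_of_lt_of_le one_pos ht1
  have htr : Br.trace = ∑ i, lam i := by
    simpa using hherm.trace_eq_sum_eigenvalues
  have htr_le : Br.trace ≤ t := by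
    have h1 : Br.trace = ∑ i, ∑ j, (A i j) ^ 2 := by
      simp [Matrix.trace, Matrix.diag, hBr, Matrix.mul_apply, sq]
    rw [h1]
    calc ∑ i, ∑ j, (A i j) ^ 2 ≤ ∑ _i : Fin k, ∑ _j : Fin n, Hmax ^ 2 :=
          Finset.sum_le_sum fun i _ => Finset.sum_le_sum fun j _ => hAsq i j
    _ = (k : ℝ) * ((n : ℝ) * Hmax ^ 2) := by simp [mul_comm, mul_assoc]
    _ ≤ t := by
        have hkn' : (k : ℝ) ≤ (n : ℝ) := by exact_mod_cast hkn
        rw [ht]; nlinarith [sq_nonneg Hmax]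
  have hlam_le : ∀ i, lam i ≤ t :=
    fun i => le_trans (Finset.single_le_sum (fun j _ => hnn j) (Finset.mem_univ i))
      (htr ▸ htr_le)
  -- determinant
  have hdet_prod : Br.det = ∏ i, lam i := by
    simpa using hherm.det_eq_prod_eigenvalues
  have hdet1 : 1 ≤ Br.det := by
    have hmap : Br = (H * Hᵀ).map (Int.cast : ℤ → ℝ) := by
      ext i j
      simp [hBr, hA, Matrix.mul_apply, Matrix.map_apply, Matrix.transpose_apply]
    have hcast : Br.det = (((H * Hᵀ).det : ℤ) : ℝ) := by
      rw [hmap]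
      exact ((RingHom.map_det (Int.castRingHom ℝ) (H * Hᵀ)).symm : _)
    have h0 : 0 < Br.det := by
      rw [hdet_prod]; exact Finset.prod_pos fun i _ => hpos i
    rw [hcast] at h0 ⊢
    exact_mod_cast Int.cast_pos.mp h0
  have hlam_ge : ∀ i, 1 / t ^ (k - 1) ≤ lam i := by
    intro i
    have h1 : Br.det ≤ lam i * t ^ (k - 1) := by
      rw [hdet_prod, ← Finset.mul_prod_erase Finset.univ lam (Finset.mem_univ i)]
      have h2 : ∏ j ∈ Finset.univ.erase i, lam j ≤ t ^ (k - 1) := by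
        calc ∏ j ∈ Finset.univ.erase i, lam j ≤ ∏ _j ∈ Finset.univ.erase i, t :=
              Finset.prod_le_prod (fun j _ => hnn j) (fun j _ => hlam_le j)
        _ = t ^ (k - 1) := by
              rw [Finset.prod_const, Finset.card_erase_of_mem (Finset.mem_univ i)]
              simp
      exact mul_le_mul_of_nonneg_left h2 (hnn i)
    rw [div_le_iff₀ (by positivity)]
    exact le_trans hdet1 h1
  ---- Rayleigh lower bound
  have lower : ∀ y : EuclideanSpace ℝ (Fin k), ‖y‖ = 1 →
      1 / ((n : ℝ) * Hmax) ^ (k - 1) ≤ ‖toEuclideanLin Aᵀ y‖ := by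
    intro y hy
    set b := hherm.eigenvectorBasis with hb
    have hbj : ∀ j, toEuclideanLin Br (b j) = lam j • b j := by
      intro j
      have h1 := hherm.mulVec_eigenvectorBasis j
      apply PiLp.ext
      intro i
      have := congrFun h1 i
      simpa [PiLp.smul_apply] using this
    have hTy : toEuclideanLin Br y = ∑ j, (lam j * (inner ℝ (b j) y : ℝ)) • b j := by
      conv_lhs => rw [← b.sum_repr' y]
      rw [map_sum]
      refine Finset.sum_congr rfl fun j _ => ?_
      rw [LinearMap.map_smul, hbj j, smul_smul, mul_comm]
    have hinner : (inner ℝ y (toEuclideanLin Br y) : ℝ) = ∑ j, lam j * (inner ℝ (b j) y : ℝ) ^ 2 := by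
      rw [hTy, inner_sum]
      refine Finset.sum_congr rfl fun j _ => ?_
      rw [real_inner_smul_right, real_inner_comm]
      ring
    have hnorm1 : ∑ j, (inner ℝ (b j) y : ℝ) ^ 2 = 1 := by
      have h1 : (inner ℝ y y : ℝ) = ∑ j, (inner ℝ (b j) y : ℝ) ^ 2 := by
        nth_rewrite 1 [← b.sum_repr' y]
        rw [sum_inner]
        refine Finset.sum_congr rfl fun j _ => ?_
        rw [real_inner_smul_left, real_inner_comm]
        ring
      rw [← h1, real_inner_self_eq_norm_sq, hy, one_pow]
    have hlink : (inner ℝ y (toEuclideanLin Br y) : ℝ) = ‖toEuclideanLin Aᵀ y‖ ^ 2 := by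
      have h1 : (inner ℝ y (toEuclideanLin Br y) : ℝ)
          = (WithLp.equiv 2 (Fin k → ℝ) y) ⬝ᵥ (Br *ᵥ (WithLp.equiv 2 (Fin k → ℝ) y)) := by
        rw [EuclideanSpace.inner_eq_star_dotProduct, star_trivial, dotProduct_comm]
        rfl
      have h2 : (WithLp.equiv 2 (Fin k → ℝ) y) ⬝ᵥ (Br *ᵥ (WithLp.equiv 2 (Fin k → ℝ) y))
          = (Aᵀ *ᵥ (WithLp.equiv 2 (Fin k → ℝ) y)) ⬝ᵥ (Aᵀ *ᵥ (WithLp.equiv 2 (Fin k → ℝ) y)) := by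
        rw [hBr, ← Matrix.mulVec_mulVec, Matrix.dotProduct_mulVec, Matrix.mulVec_transpose]
      rw [h1, h2, hnsq y]
      simp [dotProduct, sq]
    have hray : 1 / t ^ (k - 1) ≤ ‖toEuclideanLin Aᵀ y‖ ^ 2 := by
      rw [← hlink, hinner]
      calc (1 : ℝ) / t ^ (k - 1) = ∑ j, 1 / t ^ (k - 1) * (inner ℝ (b j) y : ℝ) ^ 2 := by
            rw [← Finset.mul_sum, hnorm1, mul_one]
      _ ≤ ∑ j, lam j * (inner ℝ (b j) y : ℝ) ^ 2 :=
            Finset.sum_le_sum fun j _ =>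
              mul_le_mul_of_nonneg_right (hlam_ge j) (sq_nonneg _)
    have hteq : t ^ (k - 1) = (((n : ℝ) * Hmax) ^ (k - 1)) ^ 2 := by
      rw [ht, ← pow_mul, ← pow_mul, Nat.mul_comm]
    rw [hteq] at hray
    refine (pow_le_pow_iff_left₀ (by positivity) (norm_nonneg _) two_ne_zero).mp ?_
    rw [div_pow, one_pow]
    exact hray
  ---- Assemble
  have hSne : S.Nonempty := by
    rw [hS]
    exact ⟨_, ⟨EuclideanSpace.single ⟨0, hk⟩ (1 : ℝ), by simp, rfl⟩⟩
  constructor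
  · apply Real.sSup_le
    · rintro r hr
      rw [hS] at hr
      obtain ⟨y, hy, rfl⟩ := hr
      exact upper y hy
    · positivity
  · apply le_csInf hSne
    rintro r hr
    rw [hS] at hr
    obtain ⟨y, hy, rfl⟩ := hr
    have step1 : (n : ℝ) ^ (-(n - 1 : ℤ)) * Hmax ^ (-(n - 1 : ℤ))
        = ((n : ℝ) * Hmax) ^ (-(n - 1 : ℤ)) := (mul_zpow _ _ _).symm
    have step2 : ((n : ℝ) * Hmax) ^ (-(n - 1 : ℤ)) ≤ ((n : ℝ) * Hmax) ^ (-(k - 1 : ℤ)) := by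
      apply zpow_le_zpow_right₀ hm1
      omega
    have step3 : ((n : ℝ) * Hmax) ^ (-(k - 1 : ℤ)) = 1 / ((n : ℝ) * Hmax) ^ (k - 1) := by
      rw [_root_.zpow_neg, one_div]
      congr 1
      have : ((k : ℤ) - 1) = ((k - 1 : ℕ) : ℤ) := by omega
      rw [this, zpow_natCast]
    rw [step1]
    exact le_trans step2 (le_trans (le_of_eq step3) (lower y hy))
end

section
/- Let r, R be real numbers with 0 < r ≤ R, and let v, w be nonzero complex numbers with r ≤ |v| ≤ R and r ≤ |w| ≤ R. Write v = e^ρ e^{iθ} and w = e^τ e^{iφ} with ρ, τ ∈ ℝ and θ, φ ∈ ℝ. Then (4r²/π²)·((ρ−τ)² + dist(θ−φ, 2πℤ)²) ≤ |v − w|² ≤ R²·((ρ−τ)² + dist(θ−φ, 2πℤ)²). -/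
set_option maxHeartbeats 800000

private lemma exp_diff_sq_bounds {r R p q : ℝ} (hr : 0 < r) (hrp : r ≤ Real.exp p) (hrq : r ≤ Real.exp q)
    (hRp : Real.exp p ≤ R) (hRq : Real.exp q ≤ R) :
    r ^ 2 * (p - q) ^ 2 ≤ (Real.exp p - Real.exp q) ^ 2 ∧
    (Real.exp p - Real.exp q) ^ 2 ≤ R ^ 2 * (p - q) ^ 2 := by
  wlog h : q ≤ p generalizing p q
  · have := this hrq hrp hRq hRp (le_of_not_ge h)
    constructor
    · nlinarith [this.1]
    · nlinarith [this.2]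
  have hpq : Real.exp p = Real.exp q * Real.exp (p - q) := by
    rw [← Real.exp_add]; ring_nf
  have hqp : Real.exp q = Real.exp p * Real.exp (q - p) := by
    rw [← Real.exp_add]; ring_nf
  have l1 := Real.add_one_le_exp (p - q)
  have l2 := Real.add_one_le_exp (q - p)
  have e1 : 0 < Real.exp p := Real.exp_pos p
  have e2 : 0 < Real.exp q := Real.exp_pos q
  -- r (p-q) ≤ e^q (p-q) ≤ e^p - e^q ≤ e^p (p-q) ≤ R (p-q)
  have b1 : r * (p - q) ≤ Real.exp p - Real.exp q := by nlinarith
  have b2 : Real.exp p - Real.exp q ≤ R * (p - q) := by nlinarith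
  have hd0 : 0 ≤ Real.exp p - Real.exp q := by
    have := Real.exp_le_exp.mpr h; linarith
  have hr0 : 0 ≤ r * (p - q) := by nlinarith
  constructor
  · nlinarith
  · nlinarith

private lemma one_sub_cos_bounds {d : ℝ} (h0 : 0 ≤ d) (hπ : d ≤ Real.pi) :
    4 / Real.pi ^ 2 * d ^ 2 ≤ 2 * (1 - Real.cos d) ∧ 2 * (1 - Real.cos d) ≤ d ^ 2 := by
  have hπ0 : 0 < Real.pi := Real.pi_pos
  have hcs : Real.cos d = 1 - 2 * Real.sin (d / 2) ^ 2 := by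
    have h1 := Real.cos_sq (d / 2)
    have : 2 * (d / 2) = d := by ring
    rw [this] at h1
    have h2 := Real.sin_sq_add_cos_sq (d / 2)
    nlinarith
  have hs0 : 0 ≤ Real.sin (d / 2) :=
    Real.sin_nonneg_of_nonneg_of_le_pi (by linarith) (by linarith)
  have hupper : Real.sin (d / 2) ≤ d / 2 := Real.sin_le (by linarith)
  have hlower : 2 / Real.pi * (d / 2) ≤ Real.sin (d / 2) :=
    Real.mul_le_sin (by linarith) (by linarith)
  have hl0 : 0 ≤ 2 / Real.pi * (d / 2) := by positivity
  constructor
  · have h3 : (2 / Real.pi * (d / 2)) ^ 2 ≤ Real.sin (d / 2) ^ 2 :=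
      pow_le_pow_left₀ hl0 hlower 2
    have h4 : (2 / Real.pi * (d / 2)) ^ 2 = d ^ 2 / Real.pi ^ 2 := by
      field_simp
    rw [hcs]
    rw [h4] at h3
    rw [div_mul_eq_mul_div, div_le_iff₀ (by positivity)]
    rw [div_le_iff₀ (by positivity)] at h3
    nlinarith
  · rw [hcs]; nlinarith

/-- For `0 < r ≤ R` and nonzero complex numbers `v = e^ρ e^{iθ}`, `w = e^τ e^{iφ}` with
`r ≤ |v|, |w| ≤ R`:
`(4r²/π²)((ρ−τ)² + dist(θ−φ, 2πℤ)²) ≤ |v − w|² ≤ R²((ρ−τ)² + dist(θ−φ, 2πℤ)²)`. -/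
theorem abs_sub_sq_bounds_polar (r R : ℝ) (hr : 0 < r) (hrR : r ≤ R)
    (v w : ℂ) (ρ τ θ φ : ℝ)
    (hv : v = Real.exp ρ * Complex.exp (θ * Complex.I))
    (hw : w = Real.exp τ * Complex.exp (φ * Complex.I))
    (hv1 : r ≤ ‖v‖) (hv2 : ‖v‖ ≤ R)
    (hw1 : r ≤ ‖w‖) (hw2 : ‖w‖ ≤ R)
    (dθ : ℝ) (hdθ : dθ = sInf {d : ℝ | ∃ m : ℤ, d = |θ - φ - 2 * Real.pi * m|}) :
    4 * r ^ 2 / Real.pi ^ 2 * ((ρ - τ) ^ 2 + dθ ^ 2) ≤ ‖v - w‖ ^ 2 ∧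
    ‖v - w‖ ^ 2 ≤ R ^ 2 * ((ρ - τ) ^ 2 + dθ ^ 2) := by
  have hπ0 : 0 < Real.pi := Real.pi_pos
  set x : ℝ := θ - φ with hxdef
  set m : ℤ := round (x / (2 * Real.pi)) with hmdef
  have keyabs : ∀ k : ℤ, |x - 2 * Real.pi * k| = 2 * Real.pi * |x / (2 * Real.pi) - k| := by
    intro k
    have hk : x - 2 * Real.pi * k = 2 * Real.pi * (x / (2 * Real.pi) - k) := by
      field_simp
    rw [hk, abs_mul, abs_of_pos (show (0:ℝ) < 2 * Real.pi by positivity)]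
  have hdθ' : dθ = |x - 2 * Real.pi * m| := by
    rw [hdθ]
    apply le_antisymm
    · exact csInf_le ⟨0, by rintro y ⟨k, rfl⟩; exact abs_nonneg _⟩ ⟨m, rfl⟩
    · have hne : Set.Nonempty {d : ℝ | ∃ k : ℤ, d = |x - 2 * Real.pi * k|} :=
        ⟨|x - 2 * Real.pi * (m : ℤ)|, ⟨m, rfl⟩⟩
      apply le_csInf hne
      rintro y ⟨k, rfl⟩
      rw [keyabs m, keyabs k]
      exact mul_le_mul_of_nonneg_left (round_le _ k) (by positivity)
  have hd0 : 0 ≤ dθ := hdθ' ▸ abs_nonneg _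
  have hdπ : dθ ≤ Real.pi := by
    rw [hdθ', keyabs m]
    have := abs_sub_round (x / (2 * Real.pi))
    nlinarith
  have hcos : Real.cos x = Real.cos dθ := by
    rw [hdθ', Real.cos_abs]
    have h := Real.cos_sub_int_mul_two_pi x m
    rw [← h]; ring_nf
  have ha : ‖v‖ = Real.exp ρ := by
    rw [hv]; simp [Complex.norm_exp]
  have hb : ‖w‖ = Real.exp τ := by
    rw [hw]; simp [Complex.norm_exp]
  rw [ha] at hv1 hv2; rw [hb] at hw1 hw2
  have hid : ‖v - w‖ ^ 2 =
      (Real.exp ρ - Real.exp τ) ^ 2 +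
        Real.exp ρ * Real.exp τ * (2 * (1 - Real.cos x)) := by
    rw [Complex.sq_norm, hv, hw, Complex.exp_mul_I, Complex.exp_mul_I]
    simp only [Complex.normSq_apply, Complex.sub_re, Complex.sub_im, Complex.mul_re,
      Complex.mul_im, Complex.add_re, Complex.add_im, Complex.ofReal_re, Complex.ofReal_im,
      Complex.cos_ofReal_re, Complex.cos_ofReal_im, Complex.sin_ofReal_re, Complex.sin_ofReal_im,
      Complex.I_re, Complex.I_im, mul_zero, zero_mul, sub_zero, add_zero, zero_add, mul_one]
    have hc : Real.cos x = Real.cos θ * Real.cos φ + Real.sin θ * Real.sin φ := by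
      rw [hxdef]; exact Real.cos_sub θ φ
    have h1 := Real.sin_sq_add_cos_sq θ
    have h2 := Real.sin_sq_add_cos_sq φ
    linear_combination (Real.exp ρ)^2 * h1 + (Real.exp τ)^2 * h2 +
      2 * Real.exp ρ * Real.exp τ * hc
  obtain ⟨E1, E2⟩ := exp_diff_sq_bounds hr hv1 hw1 hv2 hw2
  obtain ⟨C1, C2⟩ := one_sub_cos_bounds hd0 hdπ
  have eA := Real.exp_pos ρ
  have eB := Real.exp_pos τ
  have hAB : r ^ 2 ≤ Real.exp ρ * Real.exp τ := by nlinarith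
  have hABle : Real.exp ρ * Real.exp τ ≤ R ^ 2 := by nlinarith
  have h41 : 4 / Real.pi ^ 2 ≤ 1 := by
    rw [div_le_one (by positivity)]
    nlinarith [Real.pi_gt_three]
  have hcnn : 0 ≤ 2 * (1 - Real.cos dθ) := by nlinarith [Real.cos_le_one dθ]
  have t1 : r ^ 2 * (4 / Real.pi ^ 2 * dθ ^ 2) ≤
      Real.exp ρ * Real.exp τ * (2 * (1 - Real.cos dθ)) := by
    have h0 : 0 ≤ 4 / Real.pi ^ 2 * dθ ^ 2 := by positivity
    nlinarith
  have t2 : 4 * r ^ 2 / Real.pi ^ 2 * (ρ - τ) ^ 2 ≤ r ^ 2 * (ρ - τ) ^ 2 := by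
    have hz : (0:ℝ) ≤ r ^ 2 * (ρ - τ) ^ 2 := by positivity
    calc 4 * r ^ 2 / Real.pi ^ 2 * (ρ - τ) ^ 2
        = 4 / Real.pi ^ 2 * (r ^ 2 * (ρ - τ) ^ 2) := by ring
      _ ≤ 1 * (r ^ 2 * (ρ - τ) ^ 2) := mul_le_mul_of_nonneg_right h41 hz
      _ = r ^ 2 * (ρ - τ) ^ 2 := one_mul _
  have u1 : Real.exp ρ * Real.exp τ * (2 * (1 - Real.cos dθ)) ≤ R ^ 2 * dθ ^ 2 := by
    nlinarith
  rw [hid, hcos]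
  constructor
  · have key : 4 * r ^ 2 / Real.pi ^ 2 * ((ρ - τ) ^ 2 + dθ ^ 2) =
        4 * r ^ 2 / Real.pi ^ 2 * (ρ - τ) ^ 2 + r ^ 2 * (4 / Real.pi ^ 2 * dθ ^ 2) := by
      ring
    rw [key]
    exact add_le_add (t2.trans E1) t1
  · linarith [E2, u1]
end

section
/- Let L ⊂ ℝ^m be a lattice generated by the columns of G ∈ ℤ^{m×m} with det G ≠ 0, let n ≥ m and s a positive integer. Suppose there exists L ∈ ℤ^{m×n} that is right-invertible over ℤ (i.e., L R = I_m for some R ∈ ℤ^{n×m}) and satisfies (GL)(GL)^T = s²·I_m. Then there exists a lattice L' ⊂ ℝ^n generated by an orthonormal basis of ℝ^n such that L = s·P(L'), where P : ℝ^n → ℝ^m is the orthogonal projection onto the first m coordinates. -/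
open Matrix

/-- Lattice lifting (sufficiency): let `𝓛 = G(ℤ^m)` with `G ∈ ℤ^{m×m}`, `det G ≠ 0`,
`m ≤ n`, `s > 0`. If there is `L ∈ ℤ^{m×n}` right-invertible over `ℤ` with
`(GL)(GL)ᵀ = s² I_m`, then there is a lattice `L' = Q(ℤ^n)` generated by an
orthonormal basis (the columns of an orthogonal matrix `Q`) with `𝓛 = s·P(L')`,
where `P` is the orthogonal projection onto the first `m` coordinates. -/
theorem lattice_lifting_of_right_invertible {m n : ℕ} (hmn : m ≤ n)
    (G : Matrix (Fin m) (Fin m) ℤ) (hG : G.det ≠ 0) (s : ℕ) (hs : 0 < s)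
    (L : Matrix (Fin m) (Fin n) ℤ) (R : Matrix (Fin n) (Fin m) ℤ) (hLR : L * R = 1)
    (hortho : (G.map (Int.cast : ℤ → ℝ) * L.map (Int.cast : ℤ → ℝ)) *
        (G.map (Int.cast : ℤ → ℝ) * L.map (Int.cast : ℤ → ℝ))ᵀ
      = ((s : ℝ) ^ 2) • (1 : Matrix (Fin m) (Fin m) ℝ)) :
    ∃ Q : Matrix (Fin n) (Fin n) ℝ, Q * Qᵀ = 1 ∧
      (Set.range fun c : Fin n → ℤ => fun i : Fin m =>
          (s : ℝ) * Q.mulVec (fun j => (c j : ℝ)) (Fin.castLE hmn i))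
        = Set.range fun c : Fin m → ℤ =>
            (G.map (Int.cast : ℤ → ℝ)).mulVec fun i => (c i : ℝ) := by
  have hs0 : (s : ℝ) ≠ 0 := Nat.cast_ne_zero.mpr hs.ne'
  set A : Matrix (Fin m) (Fin n) ℝ := G.map (Int.cast : ℤ → ℝ) * L.map (Int.cast : ℤ → ℝ)
    with hA
  set X : Matrix (Fin m) (Fin n) ℝ := ((s : ℝ)⁻¹) • A with hX
  have hXX : X * Xᵀ = 1 := by
    rw [hX, Matrix.transpose_smul, Matrix.smul_mul, Matrix.mul_smul, hortho, smul_smul,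
      smul_smul]
    rw [show ((s:ℝ)⁻¹ * (s:ℝ)⁻¹ * (s:ℝ)^2) = 1 by field_simp, one_smul]
  -- define v
  classical
  set v : Fin n → EuclideanSpace ℝ (Fin n) := fun i =>
    if h : (i : ℕ) < m then WithLp.toLp 2 (fun j => X ⟨i, h⟩ j) else 0 with hv
  have hvr : ∀ i : Fin m, v (Fin.castLE hmn i) = fun j => X i j := by
    intro i
    have h : ((Fin.castLE hmn i : Fin n) : ℕ) < m := i.isLt
    simp only [hv, dif_pos h]
    rfl
  have hvo : Orthonormal ℝ ((Set.range (Fin.castLE hmn)).restrict v) := by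
    rw [orthonormal_iff_ite]
    rintro ⟨_, i, rfl⟩ ⟨_, k, rfl⟩
    have : (inner ℝ ((Set.range (Fin.castLE hmn)).restrict v ⟨Fin.castLE hmn i, ⟨i, rfl⟩⟩)
        ((Set.range (Fin.castLE hmn)).restrict v ⟨Fin.castLE hmn k, ⟨k, rfl⟩⟩) : ℝ)
        = (X * Xᵀ) i k := by
      simp only [Set.restrict_apply, hvr, Matrix.mul_apply, Matrix.transpose_apply]
      rw [PiLp.inner_apply]
      simp [RCLike.inner_apply, hvr, mul_comm]
      change ∑ x, (v (Fin.castLE hmn i)).ofLp x * (v (Fin.castLE hmn k)).ofLp x = _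
      simp [hvr]
    rw [this, hXX]
    simp [Matrix.one_apply, Fin.castLE_injective hmn |>.eq_iff, Subtype.ext_iff,
      Fin.ext_iff]
  obtain ⟨b, hb⟩ := hvo.exists_orthonormalBasis_extension_of_card_eq
    (by simp)
  set Q : Matrix (Fin n) (Fin n) ℝ := fun i j => b i j with hQ
  have hQrow : ∀ i : Fin m, ∀ j, Q (Fin.castLE hmn i) j = X i j := by
    intro i j
    rw [hQ]
    have := hb (Fin.castLE hmn i) ⟨i, rfl⟩
    show b (Fin.castLE hmn i) j = X i j
    rw [this, hvr]
  have hQQ : Q * Qᵀ = 1 := by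
    ext i k
    have : (Q * Qᵀ) i k = (inner ℝ (b i) (b k) : ℝ) := by
      rw [PiLp.inner_apply]
      simp [Matrix.mul_apply, RCLike.inner_apply, hQ, mul_comm]
      rfl
    rw [this, orthonormal_iff_ite.mp b.orthonormal i k, Matrix.one_apply]
  refine ⟨Q, hQQ, ?_⟩
  have key : ∀ c : Fin n → ℤ,
      (fun i : Fin m => (s : ℝ) * Q.mulVec (fun j => (c j : ℝ)) (Fin.castLE hmn i))
        = (G.map (Int.cast : ℤ → ℝ)).mulVec fun i => ((L.mulVec c) i : ℝ) := by
    intro c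
    funext i
    have h1 : (s : ℝ) * Q.mulVec (fun j => (c j : ℝ)) (Fin.castLE hmn i)
        = A.mulVec (fun j => (c j : ℝ)) i := by
      simp only [Matrix.mulVec, dotProduct, Finset.mul_sum]
      refine Finset.sum_congr rfl fun j _ => ?_
      rw [hQrow, hX]
      simp only [Matrix.smul_apply, smul_eq_mul]
      field_simp
    rw [h1, hA, ← Matrix.mulVec_mulVec]
    congr 1
    funext i
    simp [Matrix.mulVec, dotProduct, Matrix.map_apply]
  ext x
  simp only [Set.mem_range]
  constructor
  · rintro ⟨c, rfl⟩
    exact ⟨L.mulVec c, (key c).symm⟩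
  · rintro ⟨d, rfl⟩
    refine ⟨R.mulVec d, ?_⟩
    rw [key]
    congr 1
    funext i
    rw [Matrix.mulVec_mulVec, hLR, Matrix.one_mulVec]
end

section
/- Conversely to the lifting direction: let L ⊂ ℝ^m be a lattice generated by the columns of G ∈ ℤ^{m×m} with det G ≠ 0, n ≥ m, s a positive integer, and suppose there is a lattice L' ⊂ ℝ^n generated by an orthonormal basis such that L = s·P(L'), where P is the orthogonal projection onto the first m coordinates. Then there exists a matrix L ∈ ℤ^{m×n}, right-invertible over ℤ, with (GL)(GL)^T = s²·I_m. -/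
open Matrix

lemma cast_single {k : Type*} [DecidableEq k] (j : k) :
    (fun j' => (((Pi.single j 1 : _ → ℤ) j' : ℤ) : ℝ)) = Pi.single j 1 := by
  funext j'
  by_cases h : j' = j
  · subst h; simp
  · simp [Pi.single_apply, Ne.symm h]

/-- Lattice lifting (necessity): let `𝓛 = G(ℤ^m)` with `G ∈ ℤ^{m×m}`, `det G ≠ 0`,
`m ≤ n`, `s > 0`. If there is a lattice `L' = Q(ℤ^n)` generated by an orthonormal
basis (the columns of an orthogonal matrix `Q`) with `𝓛 = s·P(L')`, where `P` is the
orthogonal projection onto the first `m` coordinates, then there is a matrix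
`L ∈ ℤ^{m×n}`, right-invertible over `ℤ`, with `(GL)(GL)ᵀ = s² I_m`. -/
theorem right_invertible_of_lattice_lifting {m n : ℕ} (hmn : m ≤ n)
    (G : Matrix (Fin m) (Fin m) ℤ) (hG : G.det ≠ 0) (s : ℕ) (hs : 0 < s)
    (Q : Matrix (Fin n) (Fin n) ℝ) (hQ : Q * Qᵀ = 1)
    (hproj : (Set.range fun c : Fin n → ℤ => fun i : Fin m =>
          (s : ℝ) * Q.mulVec (fun j => (c j : ℝ)) (Fin.castLE hmn i))
        = Set.range fun c : Fin m → ℤ =>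
            (G.map (Int.cast : ℤ → ℝ)).mulVec fun i => (c i : ℝ)) :
    ∃ (L : Matrix (Fin m) (Fin n) ℤ) (R : Matrix (Fin n) (Fin m) ℤ),
      L * R = 1 ∧
      (G.map (Int.cast : ℤ → ℝ) * L.map (Int.cast : ℤ → ℝ)) *
          (G.map (Int.cast : ℤ → ℝ) * L.map (Int.cast : ℤ → ℝ))ᵀ
        = ((s : ℝ) ^ 2) • (1 : Matrix (Fin m) (Fin m) ℝ) := by
  set Gr := G.map (Int.cast : ℤ → ℝ) with hGr
  -- the truncated matrix U with orthonormal rows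
  set U : Matrix (Fin m) (Fin n) ℝ := Q.submatrix (Fin.castLE hmn) id with hU
  have hUUT : U * Uᵀ = 1 := by
    ext i i'
    have h := congrFun (congrFun hQ (Fin.castLE hmn i)) (Fin.castLE hmn i')
    simp only [mul_apply, one_apply] at h ⊢
    simp only [transpose_apply] at h
    rw [hU]
    simp only [transpose_apply, submatrix_apply, id]
    rw [h]
    by_cases hii : i = i'
    · simp [hii]
    · rw [if_neg hii, if_neg]
      exact fun hc => hii (Fin.castLE_injective hmn hc)
  -- Gr is injective on mulVec
  have hGrdet : Gr.det ≠ 0 := by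
    have hd := RingHom.map_det (Int.castRingHom ℝ) G
    rw [RingHom.mapMatrix_apply, Int.coe_castRingHom] at hd
    rw [hGr, ← hd]
    show ((G.det : ℤ) : ℝ) ≠ 0
    exact_mod_cast hG
  have hGrinj : Function.Injective Gr.mulVec :=
    mulVec_injective_iff_isUnit.2 (isUnit_iff_isUnit_det _ |>.2 (isUnit_iff_ne_zero.2 hGrdet))
  -- obtain L : columns of s•U are in G(ℤ^m)
  have h1 : ∀ j : Fin n, ∃ c : Fin m → ℤ,
      Gr.mulVec (fun i => (c i : ℝ)) = fun i => (s : ℝ) * U i j := by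
    intro j
    have : (fun i : Fin m => (s : ℝ) * Q.mulVec (fun j' => (((Pi.single j 1 : _ → ℤ) j' : ℤ) : ℝ))
        (Fin.castLE hmn i)) ∈ Set.range fun c : Fin m → ℤ =>
          Gr.mulVec fun i => (c i : ℝ) := by
      rw [← hproj]; exact ⟨Pi.single j 1, rfl⟩
    obtain ⟨c, hc⟩ := this
    refine ⟨c, ?_⟩
    have hc' : (Gr *ᵥ fun i => ((c i : ℤ) : ℝ)) = fun i => (s : ℝ) *
        (Q *ᵥ fun j' => (((Pi.single j 1 : _ → ℤ) j' : ℤ) : ℝ)) (Fin.castLE hmn i) := hc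
    rw [hc', cast_single, mulVec_single_one]
    rfl
  choose colL hcolL using h1
  set L : Matrix (Fin m) (Fin n) ℤ := fun i j => colL j i with hL
  have hGL : Gr * L.map (Int.cast : ℤ → ℝ) = (s : ℝ) • U := by
    ext i j
    have := congrFun (hcolL j) i
    simp only [mulVec, dotProduct] at this
    simp only [mul_apply, map_apply, Matrix.smul_apply, smul_eq_mul, hL]
    exact this
  -- obtain R : columns of G are in s•U(ℤ^n)
  have h2 : ∀ i : Fin m, ∃ r : Fin n → ℤ, L.mulVec r = Pi.single i 1 := by
    intro i
    have : Gr.mulVec (fun i' => (((Pi.single i 1 : _ → ℤ) i' : ℤ) : ℝ)) ∈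
        Set.range fun c : Fin n → ℤ => fun i : Fin m =>
          (s : ℝ) * Q.mulVec (fun j => (c j : ℝ)) (Fin.castLE hmn i) := by
      rw [hproj]; exact ⟨Pi.single i 1, rfl⟩
    obtain ⟨r, hr⟩ := this
    refine ⟨r, ?_⟩
    have hUr : (fun i' : Fin m => (s : ℝ) * U.mulVec (fun j => (r j : ℝ)) i')
        = Gr.mulVec (fun i' => (((Pi.single i 1 : _ → ℤ) i' : ℤ) : ℝ)) := by
      funext i'
      rw [← hr]
      simp only [mulVec, dotProduct, hU, submatrix_apply, id]
    have key : Gr.mulVec ((L.map (Int.cast : ℤ → ℝ)).mulVec (fun j => (r j : ℝ)))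
        = Gr.mulVec (fun i' => (((Pi.single i 1 : _ → ℤ) i' : ℤ) : ℝ)) := by
      rw [mulVec_mulVec, hGL, ← hUr]
      funext i'
      simp [mulVec_smul, smul_mulVec]
    have := hGrinj key
    funext i''
    have h3 := congrFun this i''
    simp only [mulVec, dotProduct, map_apply] at h3
    simp only [mulVec, dotProduct]
    exact_mod_cast h3
  choose colR hcolR using h2
  set R : Matrix (Fin n) (Fin m) ℤ := fun j i => colR i j with hR
  refine ⟨L, R, ?_, ?_⟩
  · ext i i'
    have := congrFun (hcolR i') i
    simp only [mulVec, dotProduct] at this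
    simp only [mul_apply, one_apply]
    simp only [hR]
    rw [this]
    by_cases h : i = i' <;> simp [Pi.single_apply, h, eq_comm]
  · rw [hGL]
    rw [transpose_smul, Matrix.smul_mul, Matrix.mul_smul, hUUT, smul_smul, sq]
end
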